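/- Let Ω be a completely regular Hausdorff topological space and Y a sublattice of C(Ω) with the compact-open topology. Then the closure of Y equals the set of all f in C(Ω) such that for every pair of points s, t in Ω there exists g in Y with f(s) = g(s) and f(t) = g(t). -/

import Mathlib

open ContinuousMap Topology

/-- Single-function version of the lattice Stone–Weierstrass argument on a compact space. -/
theorem aux_mem_closure_of_sep {X : Type*} [TopologicalSpace X] [CompactSpace X]
    (L : Set C(X, ℝ)) (nA : L.Nonempty)
    (inf_mem : ∀ f ∈ L, ∀ g ∈ L, f ⊓ g ∈ L)
    (sup_mem : ∀ f ∈ L, ∀ g ∈ L, f ⊔ g ∈ L)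
    (f : C(X, ℝ)) (sep : ∀ x y : X, ∃ g ∈ L, g x = f x ∧ g y = f y) :
    f ∈ closure L := by
  refine
    Filter.Frequently.mem_closure
      ((Filter.HasBasis.frequently_iff Metric.nhds_basis_ball).mpr fun ε pos => ?_)
  simp only [exists_prop, Metric.mem_ball]
  by_cases nX : Nonempty X
  swap
  · exact ⟨nA.some, (dist_lt_iff pos).mpr fun x => False.elim (nX ⟨x⟩), nA.choose_spec⟩
  choose g hg w₁ w₂ using sep
  let U : X → X → Set X := fun x y => {z | f z - ε < g x y z}
  have U_nhd_y : ∀ x y, U x y ∈ 𝓝 y := by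
    intro x y
    refine IsOpen.mem_nhds ?_ ?_
    · apply isOpen_lt <;> continuity
    · rw [Set.mem_setOf_eq, w₂]
      exact sub_lt_self _ pos
  let ys : X → Finset X := fun x => (CompactSpace.elim_nhds_subcover (U x) (U_nhd_y x)).choose
  let ys_w : ∀ x, ⋃ y ∈ ys x, U x y = ⊤ := fun x =>
    (CompactSpace.elim_nhds_subcover (U x) (U_nhd_y x)).choose_spec
  have ys_nonempty : ∀ x, (ys x).Nonempty := fun x =>
    Set.nonempty_of_union_eq_top_of_nonempty _ _ nX (ys_w x)
  let h : X → L := fun x =>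
    ⟨(ys x).sup' (ys_nonempty x) fun y => (g x y : C(X, ℝ)),
      Finset.sup'_mem _ sup_mem _ _ _ fun y _ => hg x y⟩
  have lt_h : ∀ x z, f z - ε < (h x : X → ℝ) z := by
    intro x z
    obtain ⟨y, ym, zm⟩ := Set.exists_set_mem_of_union_eq_top _ _ (ys_w x) z
    dsimp only [h]
    simp only [Subtype.coe_mk, coe_sup', Finset.sup'_apply, Finset.lt_sup'_iff]
    exact ⟨y, ym, zm⟩
  have h_eq : ∀ x, (h x : X → ℝ) x = f x := by intro x; simp [h, w₁]
  let W : X → Set X := fun x => {z | (h x : X → ℝ) z < f z + ε}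
  have W_nhd : ∀ x, W x ∈ 𝓝 x := by
    intro x
    refine IsOpen.mem_nhds ?_ ?_
    · apply isOpen_lt <;> fun_prop
    · dsimp only [W, Set.mem_setOf_eq]
      show (h x : X → ℝ) x < f x + ε
      rw [h_eq]
      exact lt_add_of_pos_right _ pos
  let xs : Finset X := (CompactSpace.elim_nhds_subcover W W_nhd).choose
  let xs_w : ⋃ x ∈ xs, W x = ⊤ := (CompactSpace.elim_nhds_subcover W W_nhd).choose_spec
  have xs_nonempty : xs.Nonempty := Set.nonempty_of_union_eq_top_of_nonempty _ _ nX xs_w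
  let k : (L : Type _) :=
    ⟨xs.inf' xs_nonempty fun x => (h x : C(X, ℝ)),
      Finset.inf'_mem _ inf_mem _ _ _ fun x _ => (h x).2⟩
  refine ⟨k.1, ?_, k.2⟩
  rw [dist_lt_iff pos]
  intro z
  rw [show ∀ a b ε : ℝ, dist a b < ε ↔ a < b + ε ∧ b - ε < a by
        intros; simp only [← Metric.mem_ball, Real.ball_eq_Ioo, Set.mem_Ioo, and_comm]]
  fconstructor
  · dsimp only [k]
    simp only [Finset.inf'_lt_iff, ContinuousMap.inf'_apply]
    exact Set.exists_set_mem_of_union_eq_top _ _ xs_w z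
  · dsimp only [k]
    simp only [Finset.lt_inf'_iff, ContinuousMap.inf'_apply]
    rintro x -
    apply lt_h

/-- The closure (compact-open topology) of a sublattice `Y` of `C(Ω)` is the set of all
`f` that agree with some element of `Y` at every pair of points. -/
theorem stmt1 {Ω : Type*} [TopologicalSpace Ω] [T2Space Ω] [CompletelyRegularSpace Ω]
    (Y : Submodule ℝ C(Ω, ℝ)) (hlat : ∀ f ∈ Y, ∀ g ∈ Y, f ⊔ g ∈ Y) :
    closure (Y : Set C(Ω, ℝ)) =
      {f : C(Ω, ℝ) | ∀ s t : Ω, ∃ g ∈ Y, f s = g s ∧ f t = g t} := by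
  ext f
  constructor
  · -- closure ⊆ RHS
    intro hf s t
    let e : C(Ω, ℝ) →ₗ[ℝ] ℝ × ℝ :=
      { toFun := fun g => (g s, g t)
        map_add' := fun a b => by simp [Prod.ext_iff]
        map_smul' := fun c a => by simp [Prod.ext_iff] }
    have he : Continuous e := (continuous_eval_const s).prodMk (continuous_eval_const t)
    have h1 : e f ∈ closure ((Y.map e : Submodule ℝ (ℝ × ℝ)) : Set (ℝ × ℝ)) := by
      have : e f ∈ e '' closure (Y : Set C(Ω, ℝ)) := ⟨f, hf, rfl⟩
      have h2 := image_closure_subset_closure_image (s := (Y : Set C(Ω, ℝ))) he this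
      simpa [Submodule.map_coe] using h2
    haveI : FiniteDimensional ℝ (Y.map e) :=
      FiniteDimensional.finiteDimensional_submodule (Y.map e)
    rw [(Y.map e).closed_of_finiteDimensional.closure_eq] at h1
    obtain ⟨g, hgY, hge⟩ := h1
    exact ⟨g, hgY, by simpa [e, Prod.ext_iff, eq_comm] using hge⟩
  · -- RHS ⊆ closure
    intro hf
    have basis : (𝓝 f).HasBasis
        (fun p : Set Ω × ℝ => IsCompact p.1 ∧ 0 < p.2)
        (fun p => {g | ∀ x ∈ p.1, dist (f x) (g x) < p.2}) := by
      simpa [UniformSpace.ball] using nhds_basis_uniformity'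
        (Filter.HasBasis.compactConvergenceUniformity (α := Ω) Metric.uniformity_basis_dist)
        (x := f)
    rw [mem_closure_iff_nhds_basis basis]
    rintro ⟨K, ε⟩ ⟨hK, hε⟩
    haveI : CompactSpace K := isCompact_iff_compactSpace.mp hK
    set L : Set C(K, ℝ) := (fun g : C(Ω, ℝ) => g.restrict K) '' Y with hL
    have inf_mem : ∀ a ∈ Y, ∀ b ∈ Y, a ⊓ b ∈ Y := by
      intro a ha b hb
      have : a ⊓ b = -((-a) ⊔ (-b)) := by rw [← neg_inf, neg_neg]
      rw [this]
      exact Y.neg_mem (hlat _ (Y.neg_mem ha) _ (Y.neg_mem hb))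
    have key : f.restrict K ∈ closure L := by
      apply aux_mem_closure_of_sep
      · exact ⟨(0 : C(Ω, ℝ)).restrict K, 0, Y.zero_mem, rfl⟩
      · rintro _ ⟨a, ha, rfl⟩ _ ⟨b, hb, rfl⟩
        exact ⟨a ⊓ b, inf_mem a ha b hb, by ext x; simp⟩
      · rintro _ ⟨a, ha, rfl⟩ _ ⟨b, hb, rfl⟩
        exact ⟨a ⊔ b, hlat a ha b hb, by ext x; simp⟩
      · intro x y
        obtain ⟨g, hgY, h1, h2⟩ := hf x y
        exact ⟨g.restrict K, ⟨g, hgY, rfl⟩, by simpa using h1.symm, by simpa using h2.symm⟩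
    rw [Metric.mem_closure_iff] at key
    obtain ⟨_, ⟨g, hgY, rfl⟩, hdist⟩ := key ε hε
    refine ⟨g, hgY, fun x hx => ?_⟩
    have := (dist_lt_iff hε).mp hdist ⟨x, hx⟩
    simpa using this
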